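/- Let X̂ = Û_p Ŝ_p be a full-rank stationary point of f that is not a global minimizer (so all ŝ_i ≠ 0, the σ_i are eigenvalues of A, and there exist indices i ≤ p and j with λ_i < σ_j and v_i ⊥ range(Û_p)). Then taking Z with j-th column v_i and zero elsewhere gives tr(Zᵀ Hess f(X̂)[Z]) = λ_i − σ_j < 0; hence X̂ is a strict saddle point. -/

import Mathlib

open Matrix

/-- At a full-rank stationary point `X̂ = Û_p Ŝ_p` that is not a
global minimizer, the direction `Z` with `j`-th column `v_i` (a unit eigenvector
with eigenvalue `λ_i < σ_j`, orthogonal to the columns of `X̂`) gives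
`tr(Zᵀ Hess f(X̂)[Z]) = λ_i − σ_j < 0`, so `X̂` is a strict saddle point. -/
theorem stmt_8 {n p : ℕ}
    (A : Matrix (Fin n) (Fin n) ℝ) (hA : A.IsSymm)
    (μ : ℝ) (hμ : 0 < μ)
    (w : Fin p → ℝ)
    (U : Matrix (Fin n) (Fin p) ℝ) (σ s : Fin p → ℝ)
    (horth : Uᵀ * U = 1)
    (hU : ∀ m : Fin p, A *ᵥ (fun k => U k m) = σ m • (fun k => U k m))
    (hsne : ∀ m : Fin p, s m ≠ 0)
    (hs : ∀ m : Fin p, (s m) ^ 2 = w m - σ m / μ)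
    (X : Matrix (Fin n) (Fin p) ℝ) (hX : X = U * Matrix.diagonal s)
    (hstat : A * X + μ • (X * (Xᵀ * X - Matrix.diagonal w)) = 0)
    (v : Fin n → ℝ) (hvunit : v ⬝ᵥ v = 1)
    (lami : ℝ) (hv : A *ᵥ v = lami • v)
    (hvperp : ∀ m : Fin p, v ⬝ᵥ (fun k => X k m) = 0)
    (j : Fin p) (hlt : lami < σ j) :
    (Matrix.of (fun k (m : Fin p) => if m = j then v k else 0)ᵀ *
        (A * Matrix.of (fun k (m : Fin p) => if m = j then v k else 0)
          + μ • (Matrix.of (fun k (m : Fin p) => if m = j then v k else 0) * (Xᵀ * X)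
            + X * ((Matrix.of (fun k (m : Fin p) => if m = j then v k else 0))ᵀ * X)
            + X * (Xᵀ * Matrix.of (fun k (m : Fin p) => if m = j then v k else 0))
            - Matrix.of (fun k (m : Fin p) => if m = j then v k else 0)
              * Matrix.diagonal w))).trace
      = lami - σ j ∧ lami - σ j < 0 := by
  set Z : Matrix (Fin n) (Fin p) ℝ :=
    Matrix.of (fun k (m : Fin p) => if m = j then v k else 0) with hZdef
  have hvX : ∀ m : Fin p, ∑ k, v k * X k m = 0 := by
    intro m; simpa [dotProduct] using hvperp m
  have hvv : ∑ k, v k * v k = 1 := by simpa [dotProduct] using hvunit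
  have hZX : Zᵀ * X = 0 := by
    ext m m'
    simp only [Matrix.mul_apply, Matrix.transpose_apply, hZdef, Matrix.of_apply,
      Matrix.zero_apply]
    by_cases h : m = j
    · simp [h, hvX m']
    · simp [h]
  have hXZ : Xᵀ * Z = 0 := by
    ext m m'
    simp only [Matrix.mul_apply, Matrix.transpose_apply, hZdef, Matrix.of_apply,
      Matrix.zero_apply]
    by_cases h : m' = j
    · simp only [h, if_pos rfl]
      rw [← hvX m]
      exact Finset.sum_congr rfl fun k _ => mul_comm _ _
    · simp [h]
  have hXX : Xᵀ * X = Matrix.diagonal (fun m => s m * s m) := by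
    rw [hX, Matrix.transpose_mul, Matrix.diagonal_transpose, Matrix.mul_assoc,
      ← Matrix.mul_assoc Uᵀ U, horth, Matrix.one_mul, Matrix.diagonal_mul_diagonal]
  have tdiag : ∀ d : Fin p → ℝ, (Zᵀ * (Z * Matrix.diagonal d)).trace = d j := by
    intro d
    have hZD : Z * Matrix.diagonal d
        = Matrix.of (fun k (m : Fin p) => if m = j then v k * d j else 0) := by
      ext k m
      rw [Matrix.mul_diagonal]
      simp only [hZdef, Matrix.of_apply, ite_mul, zero_mul]
      by_cases h : m = j
      · simp [h]
      · simp [h]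
    rw [hZD]
    simp only [Matrix.trace, Matrix.diag_apply, Matrix.mul_apply, Matrix.transpose_apply,
      hZdef, Matrix.of_apply]
    rw [Finset.sum_eq_single j]
    · simp only [ite_true, if_pos rfl]
      have h2 : ∀ k, v k * (v k * d j) = v k * v k * d j := fun k => by ring
      rw [Finset.sum_congr rfl fun k _ => h2 k, ← Finset.sum_mul, hvv, one_mul]
    · intro b _ hb; simp [hb]
    · simp
  have t1 : (Zᵀ * (A * Z)).trace = lami := by
    have hAv : ∀ k, ∑ l, A k l * v l = lami * v k := by
      intro k
      have := congrFun hv k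
      simpa [Matrix.mulVec, dotProduct, Pi.smul_apply, smul_eq_mul] using this
    simp only [Matrix.trace, Matrix.diag_apply, Matrix.mul_apply, Matrix.transpose_apply,
      hZdef, Matrix.of_apply]
    rw [Finset.sum_eq_single j]
    · simp only [if_pos rfl, ite_true, eq_self_iff_true]
      have h2 : ∀ k, v k * (∑ l, A k l * v l) = lami * (v k * v k) := by
        intro k; rw [hAv k]; ring
      rw [Finset.sum_congr rfl fun k _ => h2 k, ← Finset.mul_sum, hvv, mul_one]
    · intro b _ hb
      simp only [if_neg hb, mul_ite, mul_zero, Finset.sum_const_zero, zero_mul]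
    · simp
  have main : (Zᵀ * (A * Z + μ • (Z * (Xᵀ * X) + X * (Zᵀ * X) + X * (Xᵀ * Z)
      - Z * Matrix.diagonal w))).trace = lami - σ j := by
    rw [hZX, hXZ, hXX, Matrix.mul_zero, add_zero, add_zero, Matrix.mul_add,
      Matrix.mul_smul, Matrix.mul_sub, Matrix.trace_add, Matrix.trace_smul,
      Matrix.trace_sub, t1, tdiag, tdiag]
    have h3 := hs j
    have hμ' : μ ≠ 0 := ne_of_gt hμ
    have : s j * s j = w j - σ j / μ := by rw [← h3]; ring
    rw [this]
    field_simp
    rw [smul_eq_mul, mul_div_assoc', mul_div_cancel_left₀ _ hμ']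
    ring
  exact ⟨main, by linarith⟩
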